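/- Iterated Divide-and-Intersect bound for the BEC: let P_e ∈ (0,1), ε ∈ (0,1), l ∈ ℕ and L = 2^l. Define P_e(0) = P_e and P_e(m+1) = (3/16)·P_e(m)². If d_min > ln(P_e(l)/8)/ln ε and μ_ε{y : |S_y| > L} > P_e(l), then μ_ε{y : |S_y| > 2L} ≥ (3/16)^{2L−1} · (μ_ε{y : |S_y| > 1})^{2L}. -/

import Mathlib

/-- The product Bernoulli(ε) measure of a set of erasure patterns `y : Fin N → Bool`:
each coordinate is independently `true` (erased) with probability `ε`. -/
noncomputable def prodMeas {N : ℕ} (ε : ℝ) (S : Set (Fin N → Bool)) : ℝ :=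
  ∑ y : Fin N → Bool,
    Set.indicator S (fun y => ∏ i, (if y i = true then ε else 1 - ε)) y

variable {N : ℕ} {ε : ℝ}

noncomputable def wgt {N : ℕ} (ε : ℝ) (y : Fin N → Bool) : ℝ :=
  ∏ i, (if y i = true then ε else 1 - ε)

noncomputable def ind (S : Set (Fin N → Bool)) (y : Fin N → Bool) : ℝ :=
  Set.indicator S (fun _ => 1) y

variable {N : ℕ} {ε : ℝ}

lemma ind_nonneg (S : Set (Fin N → Bool)) (y : Fin N → Bool) : 0 ≤ ind S y :=
  Set.indicator_nonneg (fun _ _ => zero_le_one) y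

lemma ind_le_one (S : Set (Fin N → Bool)) (y : Fin N → Bool) : ind S y ≤ 1 :=
  Set.indicator_le' (fun _ _ => le_rfl) (fun _ _ => zero_le_one) y

lemma ind_of_mem {S : Set (Fin N → Bool)} {y} (h : y ∈ S) : ind S y = 1 :=
  Set.indicator_of_mem h _

lemma ind_of_not_mem {S : Set (Fin N → Bool)} {y} (h : y ∉ S) : ind S y = 0 :=
  Set.indicator_of_notMem h _

lemma wgt_nonneg (h0 : 0 ≤ ε) (h1 : ε ≤ 1) (y : Fin N → Bool) : 0 ≤ wgt ε y :=
  Finset.prod_nonneg fun i _ => by by_cases h : y i = true <;> simp [h] <;> linarith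

lemma sum_wgt : ∑ y : Fin N → Bool, wgt ε y = 1 := by
  classical
  have h := Fintype.prod_sum (f := fun (_ : Fin N) (b : Bool) => if b = true then ε else 1 - ε)
  have : ∑ y : Fin N → Bool, wgt ε y
      = ∏ _i : Fin N, ∑ b : Bool, (if b = true then ε else 1 - ε) := h.symm
  rw [this]
  have h2 : (∑ b : Bool, if b = true then ε else 1 - ε) = 1 := by simp only [Fintype.sum_bool]; norm_num
  simp [h2]

lemma prodMeas_eq_sum_mul (S : Set (Fin N → Bool)) :
    prodMeas ε S = ∑ y : Fin N → Bool, wgt ε y * ind S y := by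
  refine Finset.sum_congr rfl fun y _ => ?_
  by_cases h : y ∈ S
  · rw [Set.indicator_of_mem h, ind_of_mem h, mul_one]; rfl
  · rw [Set.indicator_of_notMem h, ind_of_not_mem h, mul_zero]

lemma prodMeas_nonneg (h0 : 0 ≤ ε) (h1 : ε ≤ 1) (S : Set (Fin N → Bool)) :
    0 ≤ prodMeas ε S := by
  rw [prodMeas_eq_sum_mul]
  exact Finset.sum_nonneg fun y _ => mul_nonneg (wgt_nonneg h0 h1 y) (ind_nonneg S y)

lemma prodMeas_mono (h0 : 0 ≤ ε) (h1 : ε ≤ 1) {S T : Set (Fin N → Bool)} (h : S ⊆ T) :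
    prodMeas ε S ≤ prodMeas ε T := by
  rw [prodMeas_eq_sum_mul, prodMeas_eq_sum_mul]
  refine Finset.sum_le_sum fun y _ => ?_
  by_cases hy : y ∈ S
  · rw [ind_of_mem hy, ind_of_mem (h hy)]
  · rw [ind_of_not_mem hy, mul_zero]
    exact mul_nonneg (wgt_nonneg h0 h1 y) (ind_nonneg T y)

lemma prodMeas_union_le (h0 : 0 ≤ ε) (h1 : ε ≤ 1) (S T : Set (Fin N → Bool)) :
    prodMeas ε (S ∪ T) ≤ prodMeas ε S + prodMeas ε T := by
  rw [prodMeas_eq_sum_mul, prodMeas_eq_sum_mul, prodMeas_eq_sum_mul, ← Finset.sum_add_distrib]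
  refine Finset.sum_le_sum fun y _ => ?_
  have hw := wgt_nonneg h0 h1 y
  rw [← mul_add]
  refine mul_le_mul_of_nonneg_left ?_ hw
  by_cases hS : y ∈ S
  · rw [ind_of_mem hS, ind_of_mem (Set.mem_union_left T hS)]
    have := ind_nonneg T y; linarith
  · by_cases hT : y ∈ T
    · rw [ind_of_mem hT, ind_of_mem (Set.mem_union_right S hT), ind_of_not_mem hS]; linarith
    · rw [ind_of_not_mem hS, ind_of_not_mem hT,
        ind_of_not_mem (by simp [Set.mem_union, hS, hT] : y ∉ S ∪ T)]; linarith

lemma prodMeas_empty : prodMeas ε (∅ : Set (Fin N → Bool)) = 0 := by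
  rw [prodMeas_eq_sum_mul]
  refine Finset.sum_eq_zero fun y _ => by rw [ind_of_not_mem (Set.notMem_empty y), mul_zero]

lemma prodMeas_all_true (h0 : 0 ≤ ε) (h1 : ε ≤ 1) (J : Finset (Fin N)) :
    prodMeas ε {y : Fin N → Bool | ∀ i ∈ J, y i = true} = ε ^ J.card := by
  classical
  have key : ∀ y : Fin N → Bool,
      Set.indicator {y : Fin N → Bool | ∀ i ∈ J, y i = true}
        (fun y => ∏ i, (if y i = true then ε else 1 - ε)) y
      = ∏ i, (if i ∈ J then (if y i = true then ε else 0)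
          else (if y i = true then ε else 1 - ε)) := by
    intro y
    by_cases h : ∀ i ∈ J, y i = true
    · rw [Set.indicator_of_mem (by exact h)]
      refine Finset.prod_congr rfl fun i _ => ?_
      by_cases hi : i ∈ J
      · simp [hi, h i hi]
      · simp [hi]
    · rw [Set.indicator_of_notMem (by exact h)]
      push_neg at h
      obtain ⟨i, hiJ, hi⟩ := h
      refine (Finset.prod_eq_zero (Finset.mem_univ i) ?_).symm
      simp [hiJ, hi]
  rw [prodMeas]
  simp_rw [key]
  have h := Fintype.prod_sum (f := fun (i : Fin N) (b : Bool) =>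
    if i ∈ J then (if b = true then ε else 0) else (if b = true then ε else 1 - ε))
  rw [← h]
  have h2 : ∀ i : Fin N, (∑ b : Bool, if i ∈ J then (if b = true then ε else 0)
      else (if b = true then ε else 1 - ε)) = if i ∈ J then ε else 1 := by
    intro i
    by_cases hi : i ∈ J <;> simp [hi, Fintype.sum_bool] <;> ring
  rw [Finset.prod_congr rfl fun i _ => h2 i]
  rw [Finset.prod_ite_mem Finset.univ J (fun _ => ε)]
  simp [Finset.prod_const]

lemma wgt_inf_sup (y z : Fin N → Bool) :
    wgt ε y * wgt ε z ≤ wgt ε (y ⊓ z) * wgt ε (y ⊔ z) := by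
  unfold wgt
  rw [← Finset.prod_mul_distrib, ← Finset.prod_mul_distrib]
  refine le_of_eq (Finset.prod_congr rfl fun i _ => ?_).symm
  have hinf : (y ⊓ z) i = y i ⊓ z i := rfl
  have hsup : (y ⊔ z) i = y i ⊔ z i := rfl
  rw [hinf, hsup]
  rcases le_total (y i) (z i) with h | h
  · rw [inf_eq_left.mpr h, sup_eq_right.mpr h]
  · rw [inf_eq_right.mpr h, sup_eq_left.mpr h, mul_comm]

lemma monotone_ind {U : Set (Fin N → Bool)} (hU : IsUpperSet U) : Monotone (ind U) := by
  intro y z hyz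
  by_cases hy : y ∈ U
  · rw [ind_of_mem hy, ind_of_mem (hU hyz hy)]
  · rw [ind_of_not_mem hy]; exact ind_nonneg U z

lemma prodMeas_fkg (h0 : 0 ≤ ε) (h1 : ε ≤ 1) {U V : Set (Fin N → Bool)}
    (hU : IsUpperSet U) (hV : IsUpperSet V) :
    prodMeas ε U * prodMeas ε V ≤ prodMeas ε (U ∩ V) := by
  have key := fkg (μ := wgt ε) (f := ind U) (g := ind V)
    (fun y => wgt_nonneg h0 h1 y) (fun y => ind_nonneg U y) (fun y => ind_nonneg V y)
    (monotone_ind hU) (monotone_ind hV) (fun y z => wgt_inf_sup y z)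
  rw [sum_wgt, one_mul] at key
  have e1 : ∀ y : Fin N → Bool, ind U y * ind V y = ind (U ∩ V) y := by
    intro y
    by_cases hy : y ∈ U
    · by_cases hz : y ∈ V
      · rw [ind_of_mem hy, ind_of_mem hz, ind_of_mem (Set.mem_inter hy hz), one_mul]
      · rw [ind_of_not_mem hz, ind_of_not_mem (fun hc : y ∈ U ∩ V => hz hc.2), mul_zero]
    · rw [ind_of_not_mem hy, ind_of_not_mem (fun hc : y ∈ U ∩ V => hy hc.1), zero_mul]
  simp_rw [e1] at key
  rw [prodMeas_eq_sum_mul, prodMeas_eq_sum_mul, prodMeas_eq_sum_mul]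
  exact key

lemma greedy_di (h0 : 0 < ε) (h1 : ε < 1)
    {ι : Type*} [Fintype ι] (A : ι → Set (Fin N → Bool)) (B : Set (Fin N → Bool))
    (hup : ∀ j, IsUpperSet (A j))
    (hpair : ∀ i j, i ≠ j → A i ∩ A j ⊆ B)
    {a : ℝ} (ha : 0 < a) (haA : a ≤ prodMeas ε (⋃ j, A j))
    (hsmall : ∀ j, prodMeas ε (A j) ≤ a / 8) :
    3 / 16 * a ^ 2 ≤ prodMeas ε B := by
  classical
  have h0' := h0.le
  have h1' := h1.le
  set M := Fintype.card ι with hM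
  obtain e := (Fintype.equivFin ι).symm
  set U : ℕ → Set (Fin N → Bool) :=
    fun k => ⋃ (j : Fin M) (_ : (j : ℕ) < k), A (e j) with hU
  have hUnion : (⋃ j, A j) = ⋃ (j : Fin M), A (e j) := (e.surjective.iUnion_comp A).symm
  have hUM : ∀ k, M ≤ k → U k = ⋃ (j : Fin M), A (e j) := by
    intro k hk
    ext y
    simp only [hU, Set.mem_iUnion]
    constructor
    · rintro ⟨j, _, h⟩; exact ⟨j, h⟩
    · rintro ⟨j, h⟩; exact ⟨j, lt_of_lt_of_le j.isLt hk, h⟩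
  have hP : ∃ k, a / 2 ≤ prodMeas ε (U k) := by
    refine ⟨M, ?_⟩
    rw [hUM M le_rfl, ← hUnion]
    linarith
  have hk0P' : a / 2 ≤ prodMeas ε (U (Nat.find hP)) := Nat.find_spec hP
  have hk0ne : Nat.find hP ≠ 0 := by
    intro h
    have hUe : U 0 = ∅ := by simp [hU]
    rw [h, hUe, prodMeas_empty] at hk0P'
    linarith
  obtain ⟨k, hkeq⟩ : ∃ k, Nat.find hP = k + 1 :=
    ⟨Nat.find hP - 1, (Nat.succ_pred_eq_of_pos (Nat.pos_of_ne_zero hk0ne)).symm⟩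
  have hk0P : a / 2 ≤ prodMeas ε (U (k + 1)) := by rw [← hkeq]; exact hk0P'
  have hkprev : ¬ a / 2 ≤ prodMeas ε (U k) := Nat.find_min hP (by omega)
  push_neg at hkprev
  have hkM : k < M := by
    by_contra hkM
    push_neg at hkM
    have : U (k + 1) = U k := by rw [hUM _ (le_trans hkM (Nat.le_succ k)), hUM _ hkM]
    rw [this] at hk0P
    linarith
  -- U (k+1) ⊆ U k ∪ A (e ⟨k, hkM⟩)
  have hsub : U (k + 1) ⊆ U k ∪ A (e ⟨k, hkM⟩) := by
    intro y hy
    simp only [hU, Set.mem_iUnion] at hy ⊢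
    obtain ⟨j, hj, hyj⟩ := hy
    rcases Nat.lt_or_ge (j : ℕ) k with h | h
    · exact Or.inl (Set.mem_iUnion.mpr ⟨j, Set.mem_iUnion.mpr ⟨h, hyj⟩⟩)
    · have : (j : ℕ) = k := Nat.le_antisymm (Nat.lt_succ_iff.mp hj) h
      have : j = ⟨k, hkM⟩ := Fin.ext this
      exact Or.inr (this ▸ hyj)
  have hUk1_le : prodMeas ε (U (k + 1)) ≤ 5 / 8 * a := by
    have := prodMeas_mono h0' h1' hsub
    have h2 := prodMeas_union_le h0' h1' (U k) (A (e ⟨k, hkM⟩))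
    have h3 := hsmall (e ⟨k, hkM⟩)
    linarith
  set V : Set (Fin N → Bool) := ⋃ (j : Fin M) (_ : k + 1 ≤ (j : ℕ)), A (e j) with hV
  have hcover : (⋃ (j : Fin M), A (e j)) ⊆ U (k + 1) ∪ V := by
    intro y hy
    simp only [Set.mem_iUnion] at hy
    obtain ⟨j, hyj⟩ := hy
    rcases Nat.lt_or_ge (j : ℕ) (k + 1) with h | h
    · exact Or.inl (Set.mem_iUnion.mpr ⟨j, Set.mem_iUnion.mpr ⟨h, hyj⟩⟩)
    · exact Or.inr (Set.mem_iUnion.mpr ⟨j, Set.mem_iUnion.mpr ⟨h, hyj⟩⟩)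
  have hV_ge : 3 / 8 * a ≤ prodMeas ε V := by
    have h2 := prodMeas_union_le h0' h1' (U (k + 1)) V
    have h3 := prodMeas_mono h0' h1' hcover
    rw [← hUnion] at h3
    linarith
  have hUup : IsUpperSet (U (k + 1)) :=
    isUpperSet_iUnion fun j => isUpperSet_iUnion fun _ => hup _
  have hVup : IsUpperSet V :=
    isUpperSet_iUnion fun j => isUpperSet_iUnion fun _ => hup _
  have hfkg := prodMeas_fkg h0' h1' hUup hVup
  have hUV_B : U (k + 1) ∩ V ⊆ B := by
    rintro y ⟨hyU, hyV⟩
    simp only [hU, hV, Set.mem_iUnion] at hyU hyV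
    obtain ⟨j, hj, hyj⟩ := hyU
    obtain ⟨j', hj', hyj'⟩ := hyV
    have hne : e j ≠ e j' := by
      intro h
      have hjj : j = j' := e.injective h
      rw [hjj] at hj
      omega
    exact hpair (e j) (e j') hne ⟨hyj, hyj'⟩
  have hB := prodMeas_mono h0' h1' hUV_B
  have hmul : a / 2 * (3 / 8 * a) ≤ prodMeas ε (U (k + 1)) * prodMeas ε V := by
    refine mul_le_mul hk0P hV_ge (by linarith) ?_
    exact prodMeas_nonneg h0' h1' _
  nlinarith

/-- The support `I_u` of the codeword `uG`: the positions where `uG` equals 1. -/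
def Iu {K N : ℕ} (G : Matrix (Fin K) (Fin N) (ZMod 2)) (u : Fin K → ZMod 2) :
    Finset (Fin N) :=
  Finset.univ.filter (fun i => Matrix.vecMul u G i = 1)

/-- `E_u`: the event that the message `u` is compatible with the received word,
i.e., every position of `I_u` is erased. -/
def Eu {K N : ℕ} (G : Matrix (Fin K) (Fin N) (ZMod 2)) (u : Fin K → ZMod 2) :
    Set (Fin N → Bool) :=
  {y | ∀ i ∈ Iu G u, y i = true}

/-- `S_y`: the set of messages compatible with the erasure pattern `y`,
i.e., whose codeword vanishes on all non-erased positions. -/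
def Sy {K N : ℕ} (G : Matrix (Fin K) (Fin N) (ZMod 2)) (y : Fin N → Bool) :
    Set (Fin K → ZMod 2) :=
  {u | ∀ i, y i = false → Matrix.vecMul u G i = 0}

variable {K : ℕ}

/-- `Sy` as a submodule. -/
def SyM (G : Matrix (Fin K) (Fin N) (ZMod 2)) (y : Fin N → Bool) :
    Submodule (ZMod 2) (Fin K → ZMod 2) where
  carrier := Sy G y
  add_mem' := by
    intro u v hu hv i hi
    rw [Matrix.add_vecMul, Pi.add_apply, hu i hi, hv i hi, add_zero]
  zero_mem' := by
    intro i _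
    rw [Matrix.zero_vecMul]
    rfl
  smul_mem' := by
    intro c u hu i hi
    rw [Matrix.smul_vecMul, Pi.smul_apply, hu i hi, smul_zero]

lemma ncard_Sy (G : Matrix (Fin K) (Fin N) (ZMod 2)) (y : Fin N → Bool) :
    (Sy G y).ncard = 2 ^ Module.finrank (ZMod 2) (SyM G y) := by
  haveI : Fintype (SyM G y) := Fintype.ofFinite _
  have h2 : (Sy G y).ncard = Nat.card (SyM G y) := by
    rw [← Nat.card_coe_set_eq]
    rfl
  rw [h2, Nat.card_eq_fintype_card,
    Module.card_eq_pow_finrank (K := ZMod 2) (V := (SyM G y)), ZMod.card]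

def AT (G : Matrix (Fin K) (Fin N) (ZMod 2)) (T : Submodule (ZMod 2) (Fin K → ZMod 2)) :
    Set (Fin N → Bool) :=
  {y | (T : Set (Fin K → ZMod 2)) ⊆ Sy G y}

lemma Sy_mono (G : Matrix (Fin K) (Fin N) (ZMod 2)) {y z : Fin N → Bool} (h : y ≤ z) :
    Sy G y ⊆ Sy G z := by
  intro u hu i hi
  refine hu i ?_
  have hyz := h i
  rw [hi] at hyz
  exact le_antisymm hyz (Bool.false_le _)

lemma AT_upper (G : Matrix (Fin K) (Fin N) (ZMod 2)) (T : Submodule (ZMod 2) (Fin K → ZMod 2)) :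
    IsUpperSet (AT G T) := by
  intro y z hyz hy
  exact Set.Subset.trans hy (Sy_mono G hyz)

lemma mem_AT_iff (G : Matrix (Fin K) (Fin N) (ZMod 2)) (T : Submodule (ZMod 2) (Fin K → ZMod 2))
    (y : Fin N → Bool) : y ∈ AT G T ↔ T ≤ SyM G y := Iff.rfl

lemma cover_eq (G : Matrix (Fin K) (Fin N) (ZMod 2)) (m : ℕ) :
    {y : Fin N → Bool | 2 ^ m < (Sy G y).ncard}
      = ⋃ (T : {T : Submodule (ZMod 2) (Fin K → ZMod 2) //
          Module.finrank (ZMod 2) T = m + 1}), AT G T.val := by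
  ext y
  simp only [Set.mem_setOf_eq, Set.mem_iUnion]
  constructor
  · intro h
    rw [ncard_Sy] at h
    have hrank : m + 1 ≤ Module.finrank (ZMod 2) (SyM G y) := by
      have := (pow_lt_pow_iff_right₀ (a := 2) one_lt_two).mp h
      omega
    obtain ⟨f, hf⟩ := exists_linearIndependent_of_le_finrank (R := ZMod 2)
      (M := SyM G y) hrank
    have hf' : LinearIndependent (ZMod 2) ((SyM G y).subtype ∘ f) :=
      hf.map' (SyM G y).subtype (Submodule.ker_subtype _)
    refine ⟨⟨Submodule.span (ZMod 2) (Set.range ((SyM G y).subtype ∘ f)), ?_⟩, ?_⟩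
    · rw [finrank_span_eq_card hf']
      simp
    · rw [mem_AT_iff]
      rw [Submodule.span_le]
      rintro x ⟨j, rfl⟩
      exact ((f j) : SyM G y).2
  · rintro ⟨⟨T, hT⟩, hy⟩
    rw [mem_AT_iff] at hy
    rw [ncard_Sy]
    have : m + 1 ≤ Module.finrank (ZMod 2) (SyM G y) := by
      rw [← hT]
      exact Submodule.finrank_mono hy
    calc 2 ^ m < 2 ^ (m + 1) := Nat.pow_lt_pow_right one_lt_two (Nat.lt_succ_self m)
      _ ≤ 2 ^ Module.finrank (ZMod 2) (SyM G y) := Nat.pow_le_pow_right (by norm_num) this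

lemma pairwise_into (G : Matrix (Fin K) (Fin N) (ZMod 2)) (m : ℕ)
    {T T' : Submodule (ZMod 2) (Fin K → ZMod 2)}
    (hT : Module.finrank (ZMod 2) T = m + 1) (hT' : Module.finrank (ZMod 2) T' = m + 1)
    (hne : T ≠ T') :
    AT G T ∩ AT G T' ⊆ {y : Fin N → Bool | 2 ^ (m + 1) < (Sy G y).ncard} := by
  rintro y ⟨hy, hy'⟩
  rw [mem_AT_iff] at hy hy'
  have hsup : T ⊔ T' ≤ SyM G y := sup_le hy hy'
  have hrank : m + 2 ≤ Module.finrank (ZMod 2) ↥(T ⊔ T') := by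
    by_contra hc
    push_neg at hc
    have h1 : Module.finrank (ZMod 2) ↥(T ⊔ T') ≤ Module.finrank (ZMod 2) T := by omega
    have h2 : Module.finrank (ZMod 2) ↥(T ⊔ T') ≤ Module.finrank (ZMod 2) T' := by omega
    have e1 : T = T ⊔ T' := Submodule.eq_of_le_of_finrank_le le_sup_left h1
    have e2 : T' = T ⊔ T' := Submodule.eq_of_le_of_finrank_le le_sup_right h2
    exact hne (e1.trans e2.symm)
  have : m + 2 ≤ Module.finrank (ZMod 2) (SyM G y) :=
    le_trans hrank (Submodule.finrank_mono hsup)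
  rw [Set.mem_setOf_eq, ncard_Sy]
  calc 2 ^ (m + 1) < 2 ^ (m + 2) := Nat.pow_lt_pow_right one_lt_two (Nat.lt_succ_self _)
    _ ≤ 2 ^ Module.finrank (ZMod 2) (SyM G y) := Nat.pow_le_pow_right (by norm_num) this

lemma AT_subset_all_true (G : Matrix (Fin K) (Fin N) (ZMod 2))
    {T : Submodule (ZMod 2) (Fin K → ZMod 2)} {u : Fin K → ZMod 2}
    (hu : u ∈ T) :
    AT G T ⊆ {y : Fin N → Bool | ∀ i ∈ Iu G u, y i = true} := by
  intro y hy
  rw [mem_AT_iff] at hy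
  intro i hi
  rw [Iu, Finset.mem_filter] at hi
  by_contra hyi
  have hyf : y i = false := by
    cases h : y i
    · rfl
    · exact absurd h hyi
  have := hy hu i hyf
  rw [this] at hi
  exact one_ne_zero hi.2.symm

lemma exists_ne_zero_of_finrank (T : Submodule (ZMod 2) (Fin K → ZMod 2)) (m : ℕ)
    (hT : Module.finrank (ZMod 2) T = m + 1) : ∃ u ∈ T, u ≠ 0 := by
  rw [← Submodule.ne_bot_iff]
  intro hbot
  rw [hbot, finrank_bot] at hT
  omega

/-- The recursion P_e(0) = P_e, P_e(m+1) = (3/16) P_e(m)². -/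
noncomputable def PeRec (Pe : ℝ) : ℕ → ℝ
  | 0 => Pe
  | m + 1 => 3 / 16 * (PeRec Pe m) ^ 2

lemma PeRec_pos {Pe : ℝ} (h : 0 < Pe) : ∀ m, 0 < PeRec Pe m
  | 0 => h
  | m + 1 => by
    have hm := PeRec_pos h m
    show 0 < 3 / 16 * (PeRec Pe m) ^ 2
    positivity

lemma step_di (G : Matrix (Fin K) (Fin N) (ZMod 2)) (hε0 : 0 < ε) (hε1 : ε < 1) (m : ℕ)
    (ha : 0 < prodMeas ε {y : Fin N → Bool | 2 ^ m < (Sy G y).ncard})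
    (hsmall : ∀ u : Fin K → ZMod 2, u ≠ 0 →
      ε ^ (Iu G u).card ≤ prodMeas ε {y : Fin N → Bool | 2 ^ m < (Sy G y).ncard} / 8) :
    3 / 16 * (prodMeas ε {y : Fin N → Bool | 2 ^ m < (Sy G y).ncard}) ^ 2
      ≤ prodMeas ε {y : Fin N → Bool | 2 ^ (m + 1) < (Sy G y).ncard} := by
  classical
  haveI : Finite (Submodule (ZMod 2) (Fin K → ZMod 2)) :=
    Finite.of_injective (fun T => (T : Set (Fin K → ZMod 2))) SetLike.coe_injective
  haveI : Fintype {T : Submodule (ZMod 2) (Fin K → ZMod 2) //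
      Module.finrank (ZMod 2) T = m + 1} := Fintype.ofFinite _
  have hAeq : prodMeas ε (⋃ (T : {T : Submodule (ZMod 2) (Fin K → ZMod 2) //
        Module.finrank (ZMod 2) T = m + 1}), AT G T.val)
      = prodMeas ε {y : Fin N → Bool | 2 ^ m < (Sy G y).ncard} := by
    rw [cover_eq G m]
  have hsmall' : ∀ T : {T : Submodule (ZMod 2) (Fin K → ZMod 2) //
      Module.finrank (ZMod 2) T = m + 1},
      prodMeas ε (AT G T.val) ≤ prodMeas ε {y : Fin N → Bool | 2 ^ m < (Sy G y).ncard} / 8 := by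
    intro T
    obtain ⟨u, huT, hu0⟩ := exists_ne_zero_of_finrank T.val m T.2
    have h1 := prodMeas_mono hε0.le hε1.le (AT_subset_all_true G huT)
    rw [prodMeas_all_true hε0.le hε1.le] at h1
    exact le_trans h1 (hsmall u hu0)
  exact greedy_di hε0 hε1
    (fun T : {T : Submodule (ZMod 2) (Fin K → ZMod 2) //
        Module.finrank (ZMod 2) T = m + 1} => AT G T.val)
    {y : Fin N → Bool | 2 ^ (m + 1) < (Sy G y).ncard}
    (fun T => AT_upper G T.val)
    (fun T T' hne => pairwise_into G m T.2 T'.2 (fun h => hne (Subtype.ext h)))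
    ha hAeq.ge hsmall'


/-- Iterated Divide-and-Intersect bound for the BEC. -/
theorem DI_bound_BEC_iterated (K N : ℕ) (G : Matrix (Fin K) (Fin N) (ZMod 2))
    (ε : ℝ) (hε0 : 0 < ε) (hε1 : ε < 1) (Pe : ℝ) (hPe0 : 0 < Pe) (hPe1 : Pe < 1)
    (l : ℕ) (L : ℕ) (hL : L = 2 ^ l)
    (hdmin : ∀ u : Fin K → ZMod 2, u ≠ 0 →
      Real.log (PeRec Pe l / 8) / Real.log ε < ((Iu G u).card : ℝ))
    (hbig : prodMeas ε {y : Fin N → Bool | L < (Sy G y).ncard} > PeRec Pe l) :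
    prodMeas ε {y : Fin N → Bool | 2 * L < (Sy G y).ncard}
      ≥ (3 / 16) ^ (2 * L - 1)
          * (prodMeas ε {y : Fin N → Bool | 1 < (Sy G y).ncard}) ^ (2 * L) := by
  subst hL
  have hPpos : 0 < PeRec Pe l := PeRec_pos hPe0 l
  set a : ℕ → ℝ := fun m => prodMeas ε {y : Fin N → Bool | 2 ^ m < (Sy G y).ncard} with ha
  have hmono : ∀ m, m ≤ l → a l ≤ a m := by
    intro m hm
    apply prodMeas_mono hε0.le hε1.le
    intro y hy
    exact lt_of_le_of_lt (Nat.pow_le_pow_right (by norm_num) hm) hy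
  have hbig' : PeRec Pe l < a l := hbig
  have heps : ∀ u : Fin K → ZMod 2, u ≠ 0 → ε ^ (Iu G u).card < PeRec Pe l / 8 := by
    intro u hu
    have hd := hdmin u hu
    have hlogε : Real.log ε < 0 := Real.log_neg hε0 hε1
    have h8 : 0 < PeRec Pe l / 8 := by positivity
    rw [div_lt_iff_of_neg hlogε] at hd
    have hlt : Real.log (ε ^ (Iu G u).card) < Real.log (PeRec Pe l / 8) := by
      rw [Real.log_pow]
      exact_mod_cast hd
    calc ε ^ (Iu G u).card = Real.exp (Real.log (ε ^ (Iu G u).card)) :=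
          (Real.exp_log (by positivity)).symm
      _ < Real.exp (Real.log (PeRec Pe l / 8)) := Real.exp_lt_exp.mpr hlt
      _ = PeRec Pe l / 8 := Real.exp_log h8
  have hstep : ∀ m, m ≤ l → 3 / 16 * (a m) ^ 2 ≤ a (m + 1) := by
    intro m hm
    refine step_di G hε0 hε1 m ?_ ?_
    · exact lt_of_lt_of_le (lt_trans hPpos hbig') (hmono m hm)
    · intro u hu
      have h1 := heps u hu
      have h2 := hmono m hm
      show ε ^ (Iu G u).card ≤ a m / 8
      linarith
  have ha0nn : 0 ≤ a 0 := prodMeas_nonneg hε0.le hε1.le _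
  have hind : ∀ m, m ≤ l + 1 → (3 / 16 : ℝ) ^ (2 ^ m - 1) * (a 0) ^ (2 ^ m) ≤ a m := by
    intro m
    induction m with
    | zero => intro _; simp
    | succ n ih =>
      intro hn
      have h1 := hstep n (by omega)
      have h2 := ih (by omega)
      have hrhs : 0 ≤ (3 / 16 : ℝ) ^ (2 ^ n - 1) * (a 0) ^ (2 ^ n) :=
        mul_nonneg (pow_nonneg (by norm_num) _) (pow_nonneg ha0nn _)
      have hsq : ((3 / 16 : ℝ) ^ (2 ^ n - 1) * (a 0) ^ (2 ^ n)) ^ 2 ≤ (a n) ^ 2 :=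
        pow_le_pow_left₀ hrhs h2 2
      have h2n : 1 ≤ 2 ^ n := Nat.one_le_two_pow
      have hp : 2 ^ (n + 1) = 2 * 2 ^ n := by rw [pow_succ]; ring
      have e1 : (2 ^ n - 1) * 2 + 1 = 2 ^ (n + 1) - 1 := by omega
      have e2 : 2 ^ n * 2 = 2 ^ (n + 1) := by omega
      have key : 3 / 16 * ((3 / 16 : ℝ) ^ (2 ^ n - 1) * (a 0) ^ (2 ^ n)) ^ 2
          = (3 / 16 : ℝ) ^ (2 ^ (n + 1) - 1) * (a 0) ^ (2 ^ (n + 1)) := by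
        rw [mul_pow, ← pow_mul, ← pow_mul, e2, ← mul_assoc, mul_comm (3 / 16 : ℝ)
          ((3 / 16 : ℝ) ^ ((2 ^ n - 1) * 2)), ← pow_succ, e1]
      calc (3 / 16 : ℝ) ^ (2 ^ (n + 1) - 1) * (a 0) ^ (2 ^ (n + 1))
          = 3 / 16 * ((3 / 16 : ℝ) ^ (2 ^ n - 1) * (a 0) ^ (2 ^ n)) ^ 2 := key.symm
        _ ≤ 3 / 16 * (a n) ^ 2 := by linarith
        _ ≤ a (n + 1) := h1
  have hfin := hind (l + 1) le_rfl
  have hset : {y : Fin N → Bool | 1 < (Sy G y).ncard}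
      = {y : Fin N → Bool | 2 ^ 0 < (Sy G y).ncard} := by
    ext y; simp
  have h2L : 2 * 2 ^ l = 2 ^ (l + 1) := by rw [pow_succ]; ring
  rw [ge_iff_le, hset, h2L]
  exact hfin
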